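/- Let A be a Hermitian matrix with largest eigenvalue μ_1 and smallest eigenvalue μ_n < 0. If there exist orthogonal projectors Q_0,...,Q_{c-1} forming a resolution of the identity such that Σ_{k∈[c]} Q_k A Q_k = 0, then c ≥ 1 + μ_1/|μ_n|. -/

import Mathlib

open Matrix BigOperators

lemma quad_lower_aux {m : ℕ} [Nonempty (Fin m)] {A : Matrix (Fin m) (Fin m) ℂ}
    (hA : A.IsHermitian) (v : Fin m → ℂ) :
    (⨅ i, hA.eigenvalues i) * (star v ⬝ᵥ v).re ≤ (star v ⬝ᵥ (A *ᵥ v)).re := by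
  classical
  set U : Matrix (Fin m) (Fin m) ℂ := (hA.eigenvectorUnitary : Matrix (Fin m) (Fin m) ℂ) with hU
  set w : Fin m → ℂ := (star U) *ᵥ v with hw
  have hstar : star v ᵥ* U = star w := by
    rw [hw, star_mulVec, star_eq_conjTranspose, conjTranspose_conjTranspose]
  have hvv : star v ⬝ᵥ v = star w ⬝ᵥ w := by
    calc star v ⬝ᵥ v = star v ⬝ᵥ ((U * star U) *ᵥ v) := by
          rw [(Matrix.mem_unitaryGroup_iff).mp hA.eigenvectorUnitary.2, one_mulVec]
      _ = star w ⬝ᵥ w := by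
          rw [← mulVec_mulVec, dotProduct_mulVec, hstar, hw]
  have hAv : star v ⬝ᵥ (A *ᵥ v)
      = star w ⬝ᵥ (diagonal (RCLike.ofReal ∘ hA.eigenvalues) *ᵥ w) := by
    conv_lhs => rw [hA.spectral_theorem, Unitary.conjStarAlgAut_apply]
    rw [← hU, ← mulVec_mulVec, ← mulVec_mulVec, dotProduct_mulVec, hstar, hw]
  rw [hvv, hAv]
  have hw1 : (star w ⬝ᵥ w).re = ∑ i, Complex.normSq (w i) := by
    simp [dotProduct, Complex.normSq_apply, Complex.mul_re]
  have hw2 : (star w ⬝ᵥ (diagonal (RCLike.ofReal ∘ hA.eigenvalues) *ᵥ w)).re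
      = ∑ i, hA.eigenvalues i * Complex.normSq (w i) := by
    simp only [dotProduct, mulVec_diagonal, Complex.re_sum]
    refine Finset.sum_congr rfl fun i _ => ?_
    simp [Complex.normSq_apply, Complex.mul_re, Complex.mul_im, Pi.star_apply, RCLike.ofReal]
    ring
  rw [hw1, hw2, Finset.mul_sum]
  refine Finset.sum_le_sum fun i _ => ?_
  exact mul_le_mul_of_nonneg_right
    (ciInf_le (Set.Finite.bddBelow (Set.finite_range _)) i) (Complex.normSq_nonneg _)



/-- Hoffman-type bound: if a pinching by `c` projectors annihilates a Hermitian
matrix `A` with largest eigenvalue `μ₁` and smallest eigenvalue `μ_n < 0`, then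
`c ≥ 1 + μ₁/|μ_n|`. -/
theorem hoffman_bound_pinching {m c : ℕ}
    (A : Matrix (Fin m) (Fin m) ℂ) (hA : A.IsHermitian) (hAne : A ≠ 0)
    (hneg : (⨅ i, hA.eigenvalues i) < 0)
    (Q : Fin c → Matrix (Fin m) (Fin m) ℂ)
    (hherm : ∀ k, (Q k).IsHermitian)
    (hidem : ∀ k, Q k * Q k = Q k)
    (hsum : ∑ k, Q k = 1)
    (hpinch : ∑ k, Q k * A * Q k = 0) :
    1 + (⨆ i, hA.eigenvalues i) / |⨅ i, hA.eigenvalues i| ≤ (c : ℝ) := by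
  classical
  -- m ≠ 0
  have hm : 0 < m := by
    rcases Nat.eq_zero_or_pos m with h | h
    · subst h
      rw [Real.iInf_of_isEmpty] at hneg
      exact absurd hneg (lt_irrefl 0)
    · exact h
  haveI : Nonempty (Fin m) := ⟨⟨0, hm⟩⟩
  -- c ≠ 0
  have hc : 0 < c := by
    rcases Nat.eq_zero_or_pos c with h | h
    · subst h
      simp only [Finset.univ_eq_empty, Finset.sum_empty] at hsum
      have := congrFun (congrFun hsum ⟨0, hm⟩) ⟨0, hm⟩
      simp [Matrix.one_apply] at this
    · exact h
  set μ : ℝ := ⨅ i, hA.eigenvalues i with hμ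
  obtain ⟨i₀, hi₀⟩ := Finite.exists_max hA.eigenvalues
  have hμ₁ : (⨆ i, hA.eigenvalues i) = hA.eigenvalues i₀ :=
    le_antisymm (ciSup_le hi₀) (le_ciSup (Set.Finite.bddAbove (Set.finite_range _)) i₀)
  set μ₁ : ℝ := hA.eigenvalues i₀ with hμ₁def
  set x : Fin m → ℂ := ⇑(hA.eigenvectorBasis i₀) with hx
  have hAx : A *ᵥ x = (μ₁ : ℂ) • x := by
    rw [hx, hA.mulVec_eigenvectorBasis]
    ext j
    simp [Complex.real_smul]
    exact Or.inl rfl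
  have hx1 : star x ⬝ᵥ x = 1 := by
    have h := hA.eigenvectorBasis.orthonormal.1 i₀
    have h2 : (inner ℂ (hA.eigenvectorBasis i₀) (hA.eigenvectorBasis i₀) : ℂ) = 1 := by
      rw [inner_self_eq_norm_sq_to_K, h]
      norm_num
    rw [EuclideanSpace.inner_eq_star_dotProduct, dotProduct_comm] at h2
    exact h2
  -- sum homomorphisms
  have hsmv : ∀ (M : Fin c → Matrix (Fin m) (Fin m) ℂ) (v : Fin m → ℂ),
      (∑ k, M k) *ᵥ v = ∑ k, M k *ᵥ v := fun M v =>
    map_sum (AddMonoidHom.mk' (fun N : Matrix (Fin m) (Fin m) ℂ => N *ᵥ v)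
      (fun N₁ N₂ => Matrix.add_mulVec N₁ N₂ v)) M Finset.univ
  have hdps : ∀ (f : Fin c → Fin m → ℂ),
      star x ⬝ᵥ (∑ k, f k) = ∑ k, star x ⬝ᵥ f k := fun f =>
    map_sum (AddMonoidHom.mk' (fun u : Fin m → ℂ => star x ⬝ᵥ u)
      (fun u₁ u₂ => dotProduct_add _ u₁ u₂)) f Finset.univ
  set σ : Fin c → ℂ := fun k => star x ⬝ᵥ (Q k *ᵥ x) with hσ
  have hQstar : ∀ k, star (Q k *ᵥ x) = star x ᵥ* Q k := by
    intro k
    rw [star_mulVec, (hherm k).eq]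
  have hσ1 : ∀ k, star (Q k *ᵥ x) ⬝ᵥ x = σ k := by
    intro k
    rw [hQstar k, ← dotProduct_mulVec]
  have hσ2 : ∀ k, star (Q k *ᵥ x) ⬝ᵥ (Q k *ᵥ x) = σ k := by
    intro k
    rw [hQstar k, ← dotProduct_mulVec, mulVec_mulVec, hidem k]
  have hσA : ∀ k, star (Q k *ᵥ x) ⬝ᵥ (A *ᵥ x) = (μ₁ : ℂ) * σ k := by
    intro k
    rw [hAx, dotProduct_smul, smul_eq_mul, hσ1 k]
  have hxA : star x ᵥ* A = (μ₁ : ℂ) • star x := by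
    rw [← hA.eq, ← star_mulVec, hAx, star_smul]
    simp
  have hAσ : ∀ k, star x ⬝ᵥ (A *ᵥ (Q k *ᵥ x)) = (μ₁ : ℂ) * σ k := by
    intro k
    rw [dotProduct_mulVec, hxA, smul_dotProduct, smul_eq_mul]
  have hQAQ : ∀ k, star (Q k *ᵥ x) ⬝ᵥ (A *ᵥ (Q k *ᵥ x))
      = star x ⬝ᵥ ((Q k * A * Q k) *ᵥ x) := by
    intro k
    rw [hQstar k, ← dotProduct_mulVec, mulVec_mulVec, mulVec_mulVec]
  have hσsum : ∑ k, σ k = 1 := by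
    rw [hσ]
    rw [← hdps fun k => Q k *ᵥ x, ← hsmv Q x, hsum, one_mulVec, hx1]
  have hpinch' : ∑ k, star x ⬝ᵥ ((Q k * A * Q k) *ᵥ x) = 0 := by
    rw [← hdps fun k => (Q k * A * Q k) *ᵥ x, ← hsmv (fun k => Q k * A * Q k) x, hpinch,
      zero_mulVec, dotProduct_zero]
  set v : Fin c → Fin m → ℂ := fun k => x - (c : ℂ) • (Q k *ᵥ x) with hv
  have hxAx : star x ⬝ᵥ (A *ᵥ x) = (μ₁ : ℂ) := by
    rw [hAx, dotProduct_smul, smul_eq_mul, hx1, mul_one]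
  have hq : ∀ k, star (v k) ⬝ᵥ (A *ᵥ v k)
      = (μ₁ : ℂ) - 2 * c * μ₁ * σ k + (c : ℂ)^2 * (star x ⬝ᵥ ((Q k * A * Q k) *ᵥ x)) := by
    intro k
    rw [hv]
    simp only [star_sub, star_smul, sub_dotProduct, dotProduct_sub, mulVec_sub, mulVec_smul,
      smul_dotProduct, dotProduct_smul, smul_eq_mul, star_natCast, RCLike.star_def,
      map_natCast]
    rw [hxAx, hσA k, hAσ k, hQAQ k]
    ring
  have hn : ∀ k, star (v k) ⬝ᵥ v k = 1 - 2 * c * σ k + (c : ℂ)^2 * σ k := by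
    intro k
    rw [hv]
    simp only [star_sub, star_smul, sub_dotProduct, dotProduct_sub, smul_dotProduct,
      dotProduct_smul, smul_eq_mul, star_natCast, RCLike.star_def, map_natCast]
    rw [hx1, hσ1 k, hσ2 k, hσ]
    ring
  have hqsum : ∑ k, star (v k) ⬝ᵥ (A *ᵥ v k) = (c : ℂ) * μ₁ - 2 * c * μ₁ := by
    rw [Finset.sum_congr rfl fun k _ => hq k]
    rw [Finset.sum_add_distrib, Finset.sum_sub_distrib, ← Finset.mul_sum, hσsum,
      ← Finset.mul_sum, hpinch']
    simp
  have hnsum : ∑ k, star (v k) ⬝ᵥ v k = (c : ℂ) - 2 * c + (c:ℂ)^2 := by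
    rw [Finset.sum_congr rfl fun k _ => hn k]
    rw [Finset.sum_add_distrib, Finset.sum_sub_distrib, ← Finset.mul_sum, hσsum,
      ← Finset.mul_sum, hσsum]
    simp
  have key : μ * ((c:ℝ) - 2*c + (c:ℝ)^2) ≤ (c : ℝ) * μ₁ - 2 * c * μ₁ := by
    have h1 : ∀ k, μ * (star (v k) ⬝ᵥ v k).re ≤ (star (v k) ⬝ᵥ (A *ᵥ v k)).re :=
      fun k => quad_lower_aux hA (v k)
    have h2 : μ * (∑ k, (star (v k) ⬝ᵥ v k).re) ≤ ∑ k, (star (v k) ⬝ᵥ (A *ᵥ v k)).re := by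
      rw [Finset.mul_sum]
      exact Finset.sum_le_sum fun k _ => h1 k
    have h3 : ∑ k, (star (v k) ⬝ᵥ v k).re = (c:ℝ) - 2*c + (c:ℝ)^2 := by
      have he : ((c:ℂ) - 2*c + (c:ℂ)^2) = (((c:ℝ) - 2*c + (c:ℝ)^2 : ℝ) : ℂ) := by
        push_cast; ring
      rw [← Complex.re_sum, hnsum, he, Complex.ofReal_re]
    have h4 : ∑ k, (star (v k) ⬝ᵥ (A *ᵥ v k)).re = (c : ℝ) * μ₁ - 2 * c * μ₁ := by
      have he : ((c:ℂ) * μ₁ - 2 * c * μ₁) = (((c:ℝ) * μ₁ - 2 * c * μ₁ : ℝ) : ℂ) := by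
        push_cast; ring
      rw [← Complex.re_sum, hqsum, he, Complex.ofReal_re]
    rw [h3, h4] at h2
    exact h2
  have hcR : (1:ℝ) ≤ (c:ℝ) := by exact_mod_cast hc
  have hμpos : (0:ℝ) < -μ := by linarith
  have h5 : μ₁ / (-μ) ≤ (c:ℝ) - 1 := by
    rw [div_le_iff₀ hμpos]
    nlinarith [key, hcR]
  rw [hμ₁, abs_of_neg hneg]
  linarith
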